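/- Let G be a finite group acting on a finite abelian group A by automorphisms, together with maps τ : G × A × A → k* and α : G × G × A → k* satisfying α(h,l;a)·α(g,hl;a) = α(gh,l;a)·α(g,h;ˡa) and τ(gh;a,b)/(τ(g;ʰa,ʰb)·τ(h;a,b)) = α(g,h;a)·α(g,h;b)/α(g,h;ab) for all g,h,l ∈ G and a,b ∈ A. Let A^G be the fixed points of the action. Then the assignment a ↦ [α_a], where α_a(g,h) = α(g,h;a), defines a group homomorphism A^G → H²(G, k*). -/
import Mathlib

/-- Let a group `G` act by automorphisms on an abelian group `A`, with maps
`τ : G × A × A → k*` and `α : G × G × A → k*` (values in an abelian group `M`, e.g. the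
multiplicative group of an algebraically closed field) satisfying
`α(h,l;a)·α(g,hl;a) = α(gh,l;a)·α(g,h;ˡa)` and
`τ(gh;a,b)/(τ(g;ʰa,ʰb)·τ(h;a,b)) = α(g,h;a)·α(g,h;b)/α(g,h;ab)`.
Then, writing `α_a(g,h) = α(g,h;a)`, for every fixed point `a ∈ A^G` the function `α_a`
is a 2-cocycle on `G`, and the assignment `a ↦ [α_a]` defines a group homomorphism
`A^G → H²(G, k*)`: for fixed points `a, b`, the cocycle `α_a · α_b` differs from
`α_{ab}` by a coboundary. -/
theorem stmt10 {G A M : Type} [Group G] [CommGroup A] [CommGroup M]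
    [MulDistribMulAction G A]
    (τ : G → A → A → M) (α : G → G → A → M)
    (hα : ∀ (g h l : G) (a : A),
      α h l a * α g (h * l) a = α (g * h) l a * α g h (l • a))
    (hτα : ∀ (g h : G) (a b : A),
      τ (g * h) a b * (τ g (h • a) (h • b) * τ h a b)⁻¹ =
        α g h a * α g h b * (α g h (a * b))⁻¹) :
    (∀ a : A, (∀ g : G, g • a = a) →
      ∀ g h l : G, α g h a * α (g * h) l a = α h l a * α g (h * l) a) ∧
    (∀ a b : A, (∀ g : G, g • a = a) → (∀ g : G, g • b = b) →
      ∃ f : G → M, ∀ g h : G,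
        α g h a * α g h b = α g h (a * b) * (f g * f h * (f (g * h))⁻¹)) := by
  constructor
  · intro a ha g h l
    have := hα g h l a
    rw [ha l] at this
    rw [this]; rw [mul_comm]
  · intro a b ha hb
    refine ⟨fun g => (τ g a b)⁻¹, fun g h => ?_⟩
    have := hτα g h a b
    rw [ha h, hb h] at this
    show α g h a * α g h b =
      α g h (a * b) * ((τ g a b)⁻¹ * (τ h a b)⁻¹ * ((τ (g * h) a b)⁻¹)⁻¹)
    have key : α g h a * α g h b =
        α g h (a * b) * (τ (g * h) a b * (τ g a b * τ h a b)⁻¹) := by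
      rw [this]
      simp [mul_assoc, mul_comm, mul_left_comm]
    rw [key]
    simp [mul_assoc, mul_comm, mul_left_comm]
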